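/- The vertices of Newton(M_α(x1,...,xn)) are exactly the vectors γ ∈ Z_{≥0}^n whose sequence of nonzero entries (read left to right) equals α. -/

import Mathlib

open MvPolynomial Finset
open scoped Classical

/-- The Newton polytope of a multivariate polynomial. -/
noncomputable def Newton {n : ℕ} {R : Type*} [CommSemiring R]
    (f : MvPolynomial (Fin n) R) : Set (Fin n → ℝ) :=
  convexHull ℝ ((fun d : Fin n →₀ ℕ => fun i => (d i : ℝ)) '' ↑f.support)

/-- The monomial quasisymmetric polynomial `M_α` in `n` variables. -/
noncomputable def Mq {n k : ℕ} (α : Fin k → ℕ) : MvPolynomial (Fin n) ℝ :=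
  ∑ ι ∈ Finset.univ.filter (fun ι : Fin k → Fin n => StrictMono ι),
    monomial (Finsupp.equivFunOnFinite.symm
      (fun j => ∑ i ∈ Finset.univ.filter (fun i => ι i = j), α i)) 1

section Aux
lemma sphere_extreme {n : ℕ} (s : Finset (Fin n → ℝ)) (x : Fin n → ℝ) (hx : x ∈ s)
    (hnorm : ∀ y ∈ s, ∑ i, y i ^ 2 = ∑ i, x i ^ 2) :
    x ∈ Set.extremePoints ℝ (convexHull ℝ (s : Set (Fin n → ℝ))) := by
  set f : (Fin n → ℝ) →ₗ[ℝ] ℝ :=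
    { toFun := fun y => ∑ i, x i * y i
      map_add' := by intro a b; simp [mul_add, Finset.sum_add_distrib]
      map_smul' := by intro c a; simp [Finset.mul_sum, mul_left_comm] } with hf
  have hfapp : ∀ y, f y = ∑ i, x i * y i := fun y => rfl
  have hfx : f x = ∑ i, x i ^ 2 := by simp [hfapp, sq]
  have key : ∀ y ∈ s, y ≠ x → f y < f x := by
    intro y hy hyx
    have h2 : (0:ℝ) < ∑ i, (x i - y i) ^ 2 := by
      have hne : ∃ i, x i ≠ y i := by
        by_contra h; push_neg at h; exact hyx (funext fun i => (h i).symm)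
      obtain ⟨i, hi⟩ := hne
      refine Finset.sum_pos' (fun j _ => sq_nonneg _) ⟨i, Finset.mem_univ i, ?_⟩
      have := sub_ne_zero.mpr hi
      positivity
    have hexp : ∑ i, (x i - y i) ^ 2 = 2 * (f x - f y) := by
      have hn := hnorm y hy
      have e : ∀ i, (x i - y i) ^ 2 = x i ^ 2 + y i ^ 2 - 2 * (x i * y i) := by
        intro i; ring
      rw [Finset.sum_congr rfl (fun i _ => e i)]
      rw [Finset.sum_sub_distrib, Finset.sum_add_distrib, ← Finset.mul_sum, hfx, hfapp]
      linarith
    linarith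
  have hle : ∀ y ∈ s, f y ≤ f x := by
    intro y hy
    rcases eq_or_ne y x with rfl | h
    · exact le_refl _
    · exact (key y hy h).le
  have hhull : ∀ y ∈ convexHull ℝ (s : Set (Fin n → ℝ)), f y ≤ f x := by
    intro y hy
    have hsub : convexHull ℝ (s : Set (Fin n → ℝ)) ⊆ {y | f y ≤ f x} :=
      convexHull_min (fun z hz => hle z hz) (convex_halfSpace_le (f.isLinear) _)
    exact hsub hy
  have heq : ∀ y ∈ convexHull ℝ (s : Set (Fin n → ℝ)), f y = f x → y = x := by
    intro y hy hfy
    rw [Finset.convexHull_eq] at hy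
    obtain ⟨w, hw0, hw1, hwy⟩ := hy
    rw [Finset.centerMass_eq_of_sum_1 _ _ hw1] at hwy
    have hfy2 : ∑ z ∈ s, w z * f z = f x := by
      rw [← hfy, ← hwy]; simp [map_sum, map_smul, smul_eq_mul]
    have hzero : ∀ z ∈ s, z ≠ x → w z = 0 := by
      intro z hz hzx
      by_contra hwz
      have hwzpos : 0 < w z := lt_of_le_of_ne (hw0 z hz) (Ne.symm hwz)
      have hlt : ∑ z ∈ s, w z * f z < ∑ z ∈ s, w z * f x := by
        refine Finset.sum_lt_sum (fun i hi => ?_) ⟨z, hz, ?_⟩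
        · exact mul_le_mul_of_nonneg_left (hle i hi) (hw0 i hi)
        · exact (mul_lt_mul_iff_right₀ hwzpos).mpr (key z hz hzx)
      rw [← Finset.sum_mul, hw1, one_mul] at hlt
      exact absurd hfy2 (ne_of_lt hlt)
    have hwx : w x = 1 := by
      rw [← hw1, eq_comm]
      exact Finset.sum_eq_single x (fun z hz hzx => hzero z hz hzx) (fun h => absurd hx h)
    rw [← hwy, eq_comm]
    rw [Finset.sum_eq_single x (fun z hz hzx => by rw [hzero z hz hzx, zero_smul])
      (fun h => absurd hx h), hwx, one_smul, id_eq]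
  refine ⟨subset_convexHull ℝ _ hx, ?_⟩
  intro x₁ h₁ x₂ h₂ hseg
  obtain ⟨a, b, ha, hb, hab, hsum⟩ := hseg
  have hf1 : f x₁ ≤ f x := hhull x₁ h₁
  have hf2 : f x₂ ≤ f x := hhull x₂ h₂
  have hfs : a * f x₁ + b * f x₂ = f x := by
    rw [← hsum]; simp [smul_eq_mul]
  have habx : a * f x + b * f x = f x := by rw [← add_mul, hab, one_mul]
  have he1 : f x₁ = f x := by
    by_contra h
    have h' : f x₁ < f x := lt_of_le_of_ne hf1 h
    have h1 := mul_lt_mul_of_pos_left h' ha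
    have h2 := mul_le_mul_of_nonneg_left hf2 hb.le
    linarith
  have he2 : f x₂ = f x := by
    by_contra h
    have h' : f x₂ < f x := lt_of_le_of_ne hf2 h
    have h1 := mul_lt_mul_of_pos_left h' hb
    have h2 := mul_le_mul_of_nonneg_left hf1 ha.le
    linarith
  exact heq x₁ h₁ he1

lemma mem_support_Mq {n k : ℕ} (α : Fin k → ℕ) (m : Fin n →₀ ℕ) :
    m ∈ (Mq α : MvPolynomial (Fin n) ℝ).support ↔
      ∃ ι : Fin k → Fin n, StrictMono ι ∧
        ∀ j, m j = ∑ i ∈ Finset.univ.filter (fun i => ι i = j), α i := by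
  rw [MvPolynomial.mem_support_iff, Mq, MvPolynomial.coeff_sum]
  simp only [MvPolynomial.coeff_monomial]
  rw [Finset.sum_boole]
  rw [Nat.cast_ne_zero, ← Nat.pos_iff_ne_zero, Finset.card_pos]
  constructor
  · rintro ⟨ι, hι⟩
    simp only [Finset.mem_filter, Finset.mem_univ, true_and] at hι
    refine ⟨ι, hι.1, fun j => ?_⟩
    have := congrArg (fun g => g j) (congrArg Finsupp.equivFunOnFinite hι.2)
    simpa using this.symm
  · rintro ⟨ι, hmono, hval⟩
    refine ⟨ι, ?_⟩
    simp only [Finset.mem_filter, Finset.mem_univ, true_and]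
    refine ⟨hmono, ?_⟩
    apply Finsupp.equivFunOnFinite.symm_apply_eq.mpr
    funext j
    exact (hval j).symm

lemma filter_char {n k : ℕ} (α : Fin k → ℕ) (hpos : ∀ t, 0 < α t) (γ : Fin n → ℕ) :
    (∃ ι : Fin k → Fin n, StrictMono ι ∧
        ∀ j, γ j = ∑ i ∈ Finset.univ.filter (fun i => ι i = j), α i) ↔
      (List.ofFn γ).filter (fun a => a ≠ 0) = List.ofFn α := by
  have hL : (List.ofFn γ).filter (fun a => a ≠ 0)
      = ((List.finRange n).filter (fun j => γ j ≠ 0)).map γ := by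
    rw [List.ofFn_eq_map, List.filter_map]
    rfl
  have hsortedL : ((List.finRange n).filter (fun j => γ j ≠ 0)).Pairwise (· < ·) :=
    (List.pairwise_lt_finRange n).filter _
  constructor
  · rintro ⟨ι, hmono, hval⟩
    have hfilt : ∀ t : Fin k, Finset.univ.filter (fun i => ι i = ι t) = {t} := by
      intro t; ext i
      simp [hmono.injective.eq_iff]
    have hγι : ∀ t, γ (ι t) = α t := by
      intro t; rw [hval, hfilt, Finset.sum_singleton]
    have hrange : ∀ j, γ j ≠ 0 ↔ j ∈ Set.range ι := by
      intro j
      constructor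
      · intro h0
        by_contra hr
        apply h0
        rw [hval j]
        apply Finset.sum_eq_zero
        intro i hi
        simp only [Finset.mem_filter, Finset.mem_univ, true_and] at hi
        exact absurd ⟨i, hi⟩ hr
      · rintro ⟨t, rfl⟩; rw [hγι]; exact (hpos t).ne'
    have hLof : (List.finRange n).filter (fun j => γ j ≠ 0) = List.ofFn ι := by
      have hsorted₂ : (List.ofFn ι).Pairwise (· < ·) :=
        List.pairwise_ofFn.mpr fun i j h => hmono h
      apply List.Perm.eq_of_pairwise (fun a b _ _ h1 h2 => absurd (h1.trans h2) (lt_irrefl _)) hsortedL hsorted₂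
      apply List.perm_of_nodup_nodup_toFinset_eq
        (hsortedL.imp fun h => ne_of_lt h) (hsorted₂.imp fun h => ne_of_lt h)
      ext j
      simp only [List.toFinset_filter, List.mem_toFinset, List.mem_filter,
        List.mem_finRange, List.mem_ofFn]
      simp [hrange j]
    rw [hL, hLof, List.map_ofFn]
    exact congrArg _ (funext hγι)
  · intro h
    rw [hL] at h
    set L := (List.finRange n).filter (fun j => γ j ≠ 0) with hLdef
    have hlen : L.length = k := by
      have := congrArg List.length h
      simpa using this
    set ι : Fin k → Fin n := fun t => L.get (Fin.cast hlen.symm t) with hι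
    have hmono : StrictMono ι := by
      intro a b hab
      exact List.pairwise_iff_get.mp hsortedL _ _ (by simpa using hab)
    have hmemL : ∀ j, j ∈ L ↔ γ j ≠ 0 := by
      intro j; simp [hLdef]
    have hget : ∀ t : Fin k, γ (ι t) = α t := by
      intro t
      have h2 := List.get_of_eq h (Fin.cast (by simp [hlen]) t)
      simp [List.get_ofFn] at h2; exact h2
    refine ⟨ι, hmono, fun j => ?_⟩
    by_cases h0 : γ j = 0
    · rw [h0]
      symm
      apply Finset.sum_eq_zero
      intro i hi
      simp only [Finset.mem_filter, Finset.mem_univ, true_and] at hi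
      have hjmem : j ∈ L := by rw [← hi]; exact List.get_mem L _
      exact absurd h0 ((hmemL j).mp hjmem)
    · have hjL : j ∈ L := (hmemL j).mpr h0
      obtain ⟨i, hi⟩ := List.mem_iff_get.mp hjL
      set t : Fin k := Fin.cast hlen i with ht
      have hιt : ι t = j := by
        rw [hι]; simpa [ht] using hi
      have : Finset.univ.filter (fun i => ι i = j) = {t} := by
        ext s
        simp only [Finset.mem_filter, Finset.mem_univ, true_and, Finset.mem_singleton]
        constructor
        · intro hs; exact hmono.injective (by rw [hs, hιt])
        · rintro rfl; exact hιt
      rw [this, Finset.sum_singleton, ← hget t, hιt]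

lemma sq_sum_filter (l : List ℕ) :
    ((l.filter (fun a => a ≠ 0)).map (fun a => a ^ 2)).sum
      = (l.map (fun a => a ^ 2)).sum := by
  induction l with
  | nil => rfl
  | cons a l ih =>
    by_cases h : a = 0
    · subst h; simpa using ih
    · simp [List.filter_cons, h, decide_not, ih]
      simpa [decide_not] using ih

lemma norm_eq {n k : ℕ} (α : Fin k → ℕ) (γ : Fin n → ℕ)
    (h : (List.ofFn γ).filter (fun a => a ≠ 0) = List.ofFn α) :
    ∑ i, (γ i : ℝ) ^ 2 = ∑ t, (α t : ℝ) ^ 2 := by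
  have hN : ∑ i, γ i ^ 2 = ∑ t, α t ^ 2 := by
    have h1 : ((List.ofFn γ).map (fun a => a ^ 2)).sum = ∑ i, γ i ^ 2 := by
      rw [List.map_ofFn, List.sum_ofFn]; rfl
    have h2 : ((List.ofFn α).map (fun a => a ^ 2)).sum = ∑ t, α t ^ 2 := by
      rw [List.map_ofFn, List.sum_ofFn]; rfl
    rw [← h1, ← h2, ← h, sq_sum_filter]
  have hc := congrArg (Nat.cast : ℕ → ℝ) hN
  push_cast at hc
  exact hc

end Aux

/-- The vertices of `Newton(M_α(x1,...,xn))` are exactly the `γ ∈ Z_{≥0}^n`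
whose sequence of nonzero entries equals `α`. -/
theorem stmt17 {n k : ℕ} (hk : k ≤ n) (α : Fin k → ℕ) (hpos : ∀ t, 0 < α t) :
    Set.extremePoints ℝ (Newton (Mq α : MvPolynomial (Fin n) ℝ)) =
      {x | ∃ γ : Fin n → ℕ,
        (List.ofFn γ).filter (fun a => a ≠ 0) = List.ofFn α ∧
        x = fun i => (γ i : ℝ)} := by
  set V : Finset (Fin n → ℝ) :=
    (Mq α : MvPolynomial (Fin n) ℝ).support.image (fun d => fun i => (d i : ℝ)) with hV
  have hNewton : Newton (Mq α : MvPolynomial (Fin n) ℝ) = convexHull ℝ (V : Set (Fin n → ℝ)) := by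
    rw [Newton, hV, Finset.coe_image]
  have hVmem : ∀ x, x ∈ (V : Set (Fin n → ℝ)) ↔ ∃ γ : Fin n → ℕ,
      (List.ofFn γ).filter (fun a => a ≠ 0) = List.ofFn α ∧ x = fun i => (γ i : ℝ) := by
    intro x
    simp only [hV, Finset.coe_image, Set.mem_image, Finset.mem_coe, mem_support_Mq]
    constructor
    · rintro ⟨d, hd, rfl⟩
      exact ⟨⇑d, (filter_char α hpos ⇑d).mp hd, rfl⟩
    · rintro ⟨γ, hγ, rfl⟩
      refine ⟨Finsupp.equivFunOnFinite.symm γ, ?_, ?_⟩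
      · obtain ⟨ι, h1, h2⟩ := (filter_char α hpos γ).mpr hγ
        exact ⟨ι, h1, fun j => by simpa using h2 j⟩
      · funext i; simp
  rw [hNewton]
  ext x
  constructor
  · intro hx
    exact (hVmem x).mp (extremePoints_convexHull_subset hx)
  · rintro ⟨γ, hγ, rfl⟩
    apply sphere_extreme V _ (by
      rw [← Finset.mem_coe]
      exact (hVmem _).mpr ⟨γ, hγ, rfl⟩)
    intro y hy
    obtain ⟨γ', hγ', rfl⟩ := (hVmem y).mp (by exact_mod_cast hy)
    rw [norm_eq α γ' hγ', norm_eq α γ hγ]
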